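/- For any distribution F on [0,∞) with monotone hazard rate and random variable X ~ F, the expected value E[X] is at most e times the optimal posted-price revenue: E[X] ≤ e · max_p p(1−F(p)). -/

import Mathlib

open Set Filter MeasureTheory Real Topology

/-- For an MHR distribution on `[0,∞)` with CDF `F`, density `f`, and finite
expectation, the expected value is at most `e` times the optimal posted-price
revenue `sup_p p·(1 − F(p))`. -/
theorem expectation_le_e_times_revenue
    (F f : ℝ → ℝ) (R : ℝ)
    (hF0 : F 0 = 0) (hF1 : ∀ x : ℝ, F x ≤ 1)
    (hFmono : Monotone F)
    (hFtop : Filter.Tendsto F Filter.atTop (nhds 1))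
    (hF' : ∀ x : ℝ, 0 ≤ x → HasDerivAt F (f x) x)
    (hfpos : ∀ x : ℝ, 0 ≤ x → 0 < f x)
    (hMHR : MonotoneOn (fun x => f x / (1 - F x)) (Set.Ici 0))
    (hint : MeasureTheory.IntegrableOn (fun x => x * f x) (Set.Ioi 0))
    (hR : IsLUB {r : ℝ | ∃ p : ℝ, 0 ≤ p ∧ r = p * (1 - F p)} R) :
    (∫ x in Set.Ioi (0:ℝ), x * f x) ≤ Real.exp 1 * R := by
  -- survival function is positive on [0,∞)
  have hSpos : ∀ x : ℝ, 0 ≤ x → 0 < 1 - F x := by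
    intro x hx
    rcases lt_or_ge (F x) 1 with h | h
    · linarith
    exfalso
    have hFx : F x = 1 := le_antisymm (hF1 x) h
    have h1 : Tendsto (slope F x) (𝓝[>] x) (𝓝 (f x)) :=
      (hasDerivAt_iff_tendsto_slope.mp (hF' x hx)).mono_left
        (nhdsWithin_mono x (fun y hy => hy.ne'))
    have h2 : ∀ᶠ y in 𝓝[>] x, 0 < slope F x y :=
      h1.eventually (eventually_gt_nhds (hfpos x hx))
    obtain ⟨y, hy0, hyx⟩ := (h2.and self_mem_nhdsWithin).exists
    rw [slope_def_field, div_pos_iff] at hy0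
    rcases hy0 with ⟨h3, h4⟩ | ⟨h3, h4⟩
    · have := hF1 y; linarith
    · linarith [hyx.le, sub_pos.mpr hyx]
  have hF0le : ∀ x : ℝ, 0 ≤ x → 0 ≤ F x := fun x hx => hF0 ▸ hFmono hx
  -- find q with 1 - F q = exp (-1)
  have he1 : Real.exp (-1) < 1 := Real.exp_lt_one_iff.mpr (by norm_num)
  have he1pos : 0 < Real.exp (-1) := Real.exp_pos _
  obtain ⟨M, hM0, hMF⟩ : ∃ M : ℝ, 0 ≤ M ∧ 1 - Real.exp (-1) ≤ F M := by
    have h := hFtop.eventually (eventually_gt_nhds (show 1 - Real.exp (-1) < 1 by linarith))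
    obtain ⟨M, hM1, hM2⟩ := (h.and (eventually_ge_atTop (0:ℝ))).exists
    exact ⟨M, hM2, hM1.le⟩
  have hFcont : ContinuousOn F (Set.Icc 0 M) := fun x hx =>
    (hF' x hx.1).continuousAt.continuousWithinAt
  obtain ⟨q, hqmem, hFq⟩ := intermediate_value_Icc hM0 hFcont
    (show 1 - Real.exp (-1) ∈ Set.Icc (F 0) (F M) from ⟨by rw [hF0]; linarith, hMF⟩)
  have hSq : 1 - F q = Real.exp (-1) := by linarith
  have hq0 : 0 < q := by
    rcases hqmem.1.eq_or_lt with h | h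
    · exfalso; rw [← h, hF0] at hFq; linarith
    · exact h
  set s : ℝ := f q / (1 - F q) with hs_def
  have hs : 0 < s := div_pos (hfpos q hq0.le) (hSpos q hq0.le)
  -- A x = -log (1 - F x) - s * x has a minimum at q on [0,∞)
  set A : ℝ → ℝ := fun x => -Real.log (1 - F x) - s * x with hA_def
  have hA' : ∀ x : ℝ, 0 ≤ x → HasDerivAt A (f x / (1 - F x) - s) x := by
    intro x hx
    have h1 : HasDerivAt (fun y => 1 - F y) (-f x) x := (hF' x hx).const_sub 1
    have h2 : HasDerivAt (fun y => Real.log (1 - F y)) (-f x / (1 - F x)) x :=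
      h1.log (hSpos x hx).ne'
    have h3 : HasDerivAt (fun y => s * y) s x := by
      simpa using (hasDerivAt_id x).const_mul s
    have := (h2.fun_neg).fun_sub h3
    simpa [neg_div, hA_def] using this
  have hkey : ∀ x : ℝ, 0 ≤ x → A q ≤ A x := by
    intro x hx
    rcases le_total x q with h | h
    · -- A antitone on [0, q]
      have hanti : AntitoneOn A (Set.Icc 0 q) := by
        apply antitoneOn_of_deriv_nonpos (convex_Icc 0 q)
        · exact fun y hy => (hA' y hy.1).continuousAt.continuousWithinAt
        · intro y hy
          rw [interior_Icc] at hy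
          exact (hA' y hy.1.le).differentiableAt.differentiableWithinAt
        · intro y hy
          rw [interior_Icc] at hy
          rw [(hA' y hy.1.le).deriv]
          have := hMHR (Set.mem_Ici.mpr hy.1.le) (Set.mem_Ici.mpr hq0.le) hy.2.le
          simpa using sub_nonpos.mpr this
      exact hanti ⟨hx, h⟩ ⟨hq0.le, le_refl q⟩ h
    · -- A monotone on [q, ∞)
      have hmono : MonotoneOn A (Set.Ici q) := by
        apply monotoneOn_of_deriv_nonneg (convex_Ici q)
        · exact fun y hy => (hA' y (le_trans hq0.le hy)).continuousAt.continuousWithinAt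
        · intro y hy
          rw [interior_Ici] at hy
          exact (hA' y (hq0.le.trans hy.le)).differentiableAt.differentiableWithinAt
        · intro y hy
          rw [interior_Ici] at hy
          rw [(hA' y (hq0.le.trans hy.le)).deriv]
          have := hMHR (Set.mem_Ici.mpr hq0.le) (Set.mem_Ici.mpr (hq0.le.trans hy.le)) hy.le
          simpa using sub_nonneg.mpr this
      exact hmono (Set.mem_Ici.mpr le_rfl) (Set.mem_Ici.mpr h) h
  have hAq : A q = 1 - s * q := by
    rw [hA_def]; simp only []
    rw [hSq, Real.log_exp]; ring
  have hsq1 : 1 ≤ s * q := by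
    have h0 := hkey 0 le_rfl
    rw [hAq, hA_def] at h0
    simp only [hF0, sub_zero, Real.log_one, mul_zero, neg_zero, sub_zero] at h0
    linarith
  -- pointwise bound on the survival function
  have hSle : ∀ x : ℝ, 0 ≤ x → 1 - F x ≤ Real.exp (-1 - s * (x - q)) := by
    intro x hx
    have h := hkey x hx
    rw [hAq, hA_def] at h
    simp only [] at h
    have hlog : Real.log (1 - F x) ≤ -1 - s * (x - q) := by linarith
    calc 1 - F x = Real.exp (Real.log (1 - F x)) := (Real.exp_log (hSpos x hx)).symm
      _ ≤ Real.exp (-1 - s * (x - q)) := Real.exp_le_exp.mpr hlog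
  have hSle1 : ∀ x : ℝ, 0 ≤ x → 1 - F x ≤ 1 := fun x hx => by linarith [hF0le x hx]
  -- the dominating function g and its integral
  set g : ℝ → ℝ := fun x => min 1 (Real.exp (-1 - s * (x - q))) with hg_def
  have hcontin : Continuous (fun x : ℝ => Real.exp (-1 - s * (x - q))) :=
    Real.continuous_exp.comp
      (continuous_const.sub (continuous_const.mul (continuous_id.sub continuous_const)))
  have hgcont : Continuous g := Continuous.min continuous_const hcontin
  have hgnonneg : ∀ x : ℝ, 0 ≤ g x := fun x =>
    le_min zero_le_one (Real.exp_pos _).le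
  have hgexp : ∀ x : ℝ, g x ≤ Real.exp (s * q - 1) * Real.exp (-s * x) := by
    intro x
    refine (min_le_right _ _).trans (le_of_eq ?_)
    rw [← Real.exp_add]; congr 1; ring
  have hgint : ∀ a : ℝ, MeasureTheory.IntegrableOn g (Set.Ioi a) := by
    intro a
    apply MeasureTheory.Integrable.mono'
      (((exp_neg_integrableOn_Ioi a hs).const_mul (Real.exp (s * q - 1))))
      (hgcont.aestronglyMeasurable.restrict)
    filter_upwards with x
    rw [Real.norm_eq_abs, abs_of_nonneg (hgnonneg x)]
    exact hgexp x
  set c : ℝ := q - 1 / s with hc_def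
  have hc0 : 0 ≤ c := by
    rw [hc_def, sub_nonneg, div_le_iff₀ hs]
    linarith [hsq1]
  have hcq : c ≤ q := sub_le_self q (by positivity)
  -- integral of the exponential tail
  have htail : (∫ x in Set.Ioi c, Real.exp (-1 - s * (x - q))) = 1 / s := by
    have hderiv : ∀ x ∈ Set.Ici c, HasDerivAt (fun y => -(1/s) * Real.exp (-1 - s * (y - q)))
        (Real.exp (-1 - s * (x - q))) x := by
      intro x _
      have h1 : HasDerivAt (fun y => -1 - s * (y - q)) (-s) x := by
        have : HasDerivAt (fun y : ℝ => y - q) 1 x := (hasDerivAt_id x).sub_const q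
        simpa using ((this.const_mul s).const_sub (-1 : ℝ))
      have := (h1.exp).const_mul (-(1/s))
      rw [show -(1/s) * (Real.exp (-1 - s * (x - q)) * -s) = Real.exp (-1 - s * (x - q)) by
        field_simp] at this
      exact this
    have hintexp : MeasureTheory.IntegrableOn
        (fun x => Real.exp (-1 - s * (x - q))) (Set.Ioi c) := by
      apply MeasureTheory.Integrable.mono'
        ((exp_neg_integrableOn_Ioi c hs).const_mul (Real.exp (s * q - 1)))
        (hcontin.aestronglyMeasurable.restrict)
      filter_upwards with x
      rw [Real.norm_eq_abs, abs_of_nonneg (Real.exp_pos _).le, ← Real.exp_add]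
      exact le_of_eq (by congr 1; ring)
    have hlim : Tendsto (fun y => -(1/s) * Real.exp (-1 - s * (y - q))) atTop (𝓝 0) := by
      have h1 : Tendsto (fun y : ℝ => -1 - s * (y - q)) atTop atBot := by
        have h2 : Tendsto (fun y : ℝ => s * (y - q)) atTop atTop :=
          (tendsto_atTop_add_const_right _ _ tendsto_id).const_mul_atTop hs
        have h3 := tendsto_neg_atTop_atBot.comp h2
        have h4 := tendsto_atBot_add_const_left atTop (-1) h3
        simpa [Function.comp, sub_eq_add_neg] using h4
      have := Real.tendsto_exp_atBot.comp h1
      simpa using (this.const_mul (-(1/s)))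
    rw [MeasureTheory.integral_Ioi_of_hasDerivAt_of_tendsto' hderiv hintexp hlim]
    rw [hc_def]
    have h5 : -1 - s * (q - 1 / s - q) = 0 := by field_simp; ring
    rw [h5, Real.exp_zero]
    ring
  have hgq : (∫ x in Set.Ioi (0:ℝ), g x) ≤ q := by
    have hsplit : (∫ x in Set.Ioi (0:ℝ), g x)
        = (∫ x in Set.Ioc 0 c, g x) + ∫ x in Set.Ioi c, g x := by
      rw [← MeasureTheory.setIntegral_union (Set.Ioc_disjoint_Ioi le_rfl)
        measurableSet_Ioi ((hgint 0).mono_set Set.Ioc_subset_Ioi_self) (hgint c)]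
      rw [Set.Ioc_union_Ioi_eq_Ioi hc0]
    have h1 : (∫ x in Set.Ioc 0 c, g x) ≤ c := by
      have hmc : (∫ _x in Set.Ioc (0:ℝ) c, (1:ℝ)) = c := by
        rw [MeasureTheory.setIntegral_const, smul_eq_mul, mul_one, measureReal_def, Real.volume_Ioc,
          ENNReal.toReal_ofReal (by linarith : (0:ℝ) ≤ c - 0), sub_zero]
      calc (∫ x in Set.Ioc (0:ℝ) c, g x)
          ≤ ∫ _x in Set.Ioc (0:ℝ) c, (1:ℝ) := by
            apply MeasureTheory.setIntegral_mono_on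
              ((hgint 0).mono_set Set.Ioc_subset_Ioi_self)
              (MeasureTheory.integrableOn_const measure_Ioc_lt_top.ne)
              measurableSet_Ioc
            intro x _
            exact min_le_left _ _
        _ = c := hmc
    have h2 : (∫ x in Set.Ioi c, g x) ≤ 1 / s := by
      rw [← htail]
      apply MeasureTheory.setIntegral_mono_on (hgint c) _ measurableSet_Ioi
      · exact fun x _ => min_le_right _ _
      · apply MeasureTheory.Integrable.mono'
          ((exp_neg_integrableOn_Ioi c hs).const_mul (Real.exp (s * q - 1)))
          (hcontin.aestronglyMeasurable.restrict)
        filter_upwards with x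
        rw [Real.norm_eq_abs, abs_of_nonneg (Real.exp_pos _).le, ← Real.exp_add]
        exact le_of_eq (by congr 1; ring)
    rw [hsplit]
    have hcs : c + 1 / s = q := by rw [hc_def]; ring
    exact le_of_le_of_eq (add_le_add h1 h2) hcs
  -- bound the partial integrals ∫₀ᴹ x f x  by q
  have hperM : ∀ M : ℝ, 0 ≤ M → (∫ x in (0:ℝ)..M, x * f x) ≤ q := by
    intro M hM
    have hderiv : ∀ x ∈ Set.uIcc (0:ℝ) M, HasDerivAt (fun y => y * (F y - 1))
        ((F x - 1) + x * f x) x := by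
      intro x hx
      rw [Set.uIcc_of_le hM] at hx
      have := (hasDerivAt_id x).fun_mul ((hF' x hx.1).sub_const 1)
      simpa [mul_comm] using this
    have hi1 : IntervalIntegrable (fun x => F x - 1) MeasureTheory.volume 0 M := by
      apply ContinuousOn.intervalIntegrable
      rw [Set.uIcc_of_le hM]
      exact fun x hx => ((hF' x hx.1).continuousAt.continuousWithinAt).sub
        continuousWithinAt_const
    have hi2 : IntervalIntegrable (fun x => x * f x) MeasureTheory.volume 0 M := by
      rw [intervalIntegrable_iff_integrableOn_Ioc_of_le hM]
      exact hint.mono_set Set.Ioc_subset_Ioi_self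
    have hibp := intervalIntegral.integral_eq_sub_of_hasDerivAt hderiv (hi1.add hi2)
    rw [intervalIntegral.integral_add hi1 hi2] at hibp
    simp only [hF0, zero_mul, sub_zero] at hibp
    have hFM : M * (F M - 1) ≤ 0 := by nlinarith [hF1 M]
    have hSint : MeasureTheory.IntegrableOn (fun x => 1 - F x) (Set.Ioc 0 M) := by
      have := hi1.neg
      rw [intervalIntegrable_iff_integrableOn_Ioc_of_le hM] at this
      exact this.congr_fun (fun x _ => by simp only [Pi.neg_apply]; ring) measurableSet_Ioc
    have hle : (∫ x in (0:ℝ)..M, (1 - F x)) ≤ q := by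
      rw [intervalIntegral.integral_of_le hM]
      calc (∫ x in Set.Ioc (0:ℝ) M, (1 - F x))
          ≤ ∫ x in Set.Ioc (0:ℝ) M, g x := by
            apply MeasureTheory.setIntegral_mono_on hSint
              ((hgint 0).mono_set Set.Ioc_subset_Ioi_self) measurableSet_Ioc
            intro x hx
            exact le_min (hSle1 x hx.1.le) (hSle x hx.1.le)
        _ ≤ ∫ x in Set.Ioi (0:ℝ), g x := by
            apply MeasureTheory.setIntegral_mono_set (hgint 0)
              (Filter.Eventually.of_forall (fun x => hgnonneg x))
              (HasSubset.Subset.eventuallyLE Set.Ioc_subset_Ioi_self)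
        _ ≤ q := hgq
    have hneg : (∫ x in (0:ℝ)..M, (F x - 1)) = -(∫ x in (0:ℝ)..M, (1 - F x)) := by
      rw [← intervalIntegral.integral_neg]
      congr 1
      funext x
      ring
    rw [hneg] at hibp
    linarith
  -- pass to the limit and conclude
  have hlim := MeasureTheory.intervalIntegral_tendsto_integral_Ioi 0 hint tendsto_id
  have hEq : (∫ x in Set.Ioi (0:ℝ), x * f x) ≤ q :=
    le_of_tendsto hlim
      (by filter_upwards [eventually_ge_atTop (0:ℝ)] with M hM using hperM M hM)
  have hmem : q * Real.exp (-1) ∈ {r : ℝ | ∃ p : ℝ, 0 ≤ p ∧ r = p * (1 - F p)} :=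
    ⟨q, hq0.le, by rw [hSq]⟩
  have hqR : q * Real.exp (-1) ≤ R := hR.1 hmem
  have hee : Real.exp 1 * Real.exp (-1) = 1 := by
    rw [← Real.exp_add]; norm_num
  calc (∫ x in Set.Ioi (0:ℝ), x * f x) ≤ q := hEq
    _ = Real.exp 1 * (q * Real.exp (-1)) := by
        rw [show Real.exp 1 * (q * Real.exp (-1))
            = q * (Real.exp 1 * Real.exp (-1)) from by ring, hee, mul_one]
    _ ≤ Real.exp 1 * R := mul_le_mul_of_nonneg_left hqR (Real.exp_pos 1).le
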